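/- For all nonnegative integers k₁ < k₂ and all reals 0 < x₁ < x₂, the 2×2 determinant I_{k₁}(x₁) I_{k₂}(x₂) − I_{k₂}(x₁) I_{k₁}(x₂) is strictly positive. -/

import Mathlib

open Real MeasureTheory intervalIntegral Set Metric Filter Topology

noncomputable def besselI (j : ℤ) (x : ℝ) : ℝ :=
  (1 / Real.pi) * ∫ φ in (0:ℝ)..Real.pi, Real.exp (x * Real.cos φ) * Real.cos (j * φ)

lemma besselI_cont_integrand (j : ℤ) (x : ℝ) :
    Continuous fun φ : ℝ => Real.exp (x * Real.cos φ) * Real.cos (j * φ) := by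
  fun_prop

lemma hasDerivAt_besselI (j : ℤ) (x : ℝ) :
    HasDerivAt (besselI j) ((besselI (j-1) x + besselI (j+1) x) / 2) x := by
  have key := intervalIntegral.hasDerivAt_integral_of_dominated_loc_of_deriv_le
    (F := fun y φ => Real.exp (y * Real.cos φ) * Real.cos (j*φ))
    (F' := fun y φ => Real.exp (y * Real.cos φ) * Real.cos φ * Real.cos (j*φ))
    (bound := fun _ => Real.exp (|x|+1)) (a := 0) (b := Real.pi) (μ := volume)
    (x₀ := x) (ball_mem_nhds x one_pos) ?_ ?_ ?_ ?_ ?_ ?_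
  · have h2 := (key.2.const_mul (1 / Real.pi))
    have hval : (1/Real.pi) * ∫ φ in (0:ℝ)..Real.pi,
        Real.exp (x * Real.cos φ) * Real.cos φ * Real.cos ((j:ℝ)*φ)
        = (besselI (j-1) x + besselI (j+1) x) / 2 := by
      rw [besselI, besselI, show ∀ A B : ℝ, ((1/Real.pi) * A + (1/Real.pi) * B)/2
        = (1/Real.pi) * ((A + B)/2) from by intros; ring]
      congr 1
      rw [← intervalIntegral.integral_add
        ((besselI_cont_integrand (j-1) x).intervalIntegrable _ _)
        ((besselI_cont_integrand (j+1) x).intervalIntegrable _ _),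
        ← intervalIntegral.integral_div]
      apply intervalIntegral.integral_congr
      intro φ _
      have := Real.two_mul_cos_mul_cos ((j:ℝ)*φ) φ
      push_cast
      rw [show ((j:ℝ)-1)*φ = (j:ℝ)*φ - φ by ring, show ((j:ℝ)+1)*φ = (j:ℝ)*φ + φ by ring]
      linear_combination (Real.exp (x * Real.cos φ) / 2) * this
    rw [← hval]
    exact h2
  · filter_upwards with y
    exact ((besselI_cont_integrand j y)).aestronglyMeasurable
  · exact (besselI_cont_integrand j x).intervalIntegrable _ _
  · exact (Continuous.aestronglyMeasurable (by fun_prop))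
  · filter_upwards with φ
    intro _ y hy
    have hyx : |y| ≤ |x| + 1 := by
      have := abs_sub_abs_le_abs_sub y x
      have h2 := mem_ball_iff_norm.mp hy
      simp only [Real.norm_eq_abs] at h2
      linarith
    have h1 : |Real.cos φ| ≤ 1 := Real.abs_cos_le_one φ
    have h2 : |Real.cos ((j:ℝ)*φ)| ≤ 1 := Real.abs_cos_le_one _
    have h3 : y * Real.cos φ ≤ |x| + 1 := by
      calc y * Real.cos φ ≤ |y * Real.cos φ| := le_abs_self _
      _ = |y| * |Real.cos φ| := abs_mul _ _
      _ ≤ (|x|+1) * 1 := by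
          apply mul_le_mul hyx h1 (abs_nonneg _) (by positivity)
      _ = |x| + 1 := by ring
    rw [Real.norm_eq_abs, abs_mul, abs_mul, Real.abs_exp]
    calc Real.exp (y * Real.cos φ) * |Real.cos φ| * |Real.cos ((j:ℝ)*φ)|
        ≤ Real.exp (|x|+1) * 1 * 1 := by
          gcongr <;> simp [Real.exp_le_exp.mpr h3]
      _ = Real.exp (|x|+1) := by ring
  · exact intervalIntegrable_const
  · filter_upwards with φ
    intro _ y _
    simpa using (((hasDerivAt_id y).mul_const (Real.cos φ)).exp).mul_const (Real.cos ((j:ℝ)*φ))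

lemma besselI_recurrence (j : ℤ) {x : ℝ} (hx : x ≠ 0) :
    besselI (j-1) x - besselI (j+1) x = (2*(j:ℝ)/x) * besselI j x := by
  have hu : ∀ φ ∈ Set.uIcc (0:ℝ) Real.pi,
      HasDerivAt (fun φ => Real.sin ((j:ℝ)*φ)) ((j:ℝ) * Real.cos ((j:ℝ)*φ)) φ := by
    intro φ _
    simpa [mul_comm] using (((hasDerivAt_id φ).const_mul (j:ℝ)).sin)
  have hv : ∀ φ ∈ Set.uIcc (0:ℝ) Real.pi,
      HasDerivAt (fun φ => Real.exp (x*Real.cos φ)) (Real.exp (x*Real.cos φ) * (x * -Real.sin φ)) φ := by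
    intro φ _
    exact ((Real.hasDerivAt_cos φ).const_mul x).exp
  have parts := intervalIntegral.integral_mul_deriv_eq_deriv_mul hu hv
      (Continuous.intervalIntegrable (by fun_prop) _ _)
      (Continuous.intervalIntegrable (by fun_prop) _ _)
  have h0 : Real.sin ((j:ℝ)*Real.pi) = 0 := by
    simpa using Real.sin_int_mul_pi j
  rw [h0] at parts
  simp only [Real.sin_zero, mul_zero, zero_mul, zero_sub, sub_zero, zero_add] at parts
  -- parts : ∫ sin (jφ) * (exp (x cos φ) * (x * -sin φ)) = - ∫ (j cos jφ) * exp (x cos φ)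
  rw [besselI, besselI, besselI, ← mul_sub,
    ← intervalIntegral.integral_sub
      ((besselI_cont_integrand (j-1) x).intervalIntegrable _ _)
      ((besselI_cont_integrand (j+1) x).intervalIntegrable _ _)]
  have congr1 : ∀ φ, Real.exp (x * Real.cos φ) * Real.cos ((↑(j-1):ℝ)*φ)
        - Real.exp (x * Real.cos φ) * Real.cos ((↑(j+1):ℝ)*φ)
      = (-2/x) * (Real.sin ((j:ℝ)*φ) * (Real.exp (x*Real.cos φ) * (x * -Real.sin φ))) := by
    intro φ
    have h2 := Real.two_mul_sin_mul_sin ((j:ℝ)*φ) φ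
    push_cast
    rw [show ((j:ℝ)-1)*φ = (j:ℝ)*φ - φ by ring, show ((j:ℝ)+1)*φ = (j:ℝ)*φ + φ by ring]
    have hx1 : x * x⁻¹ = 1 := mul_inv_cancel₀ hx
    linear_combination (-Real.exp (x*Real.cos φ)) * h2 - 2*Real.sin ((j:ℝ)*φ)*Real.exp (x*Real.cos φ)*Real.sin φ * hx1
  rw [intervalIntegral.integral_congr (fun φ _ => congr1 φ),
    intervalIntegral.integral_const_mul, parts,
    show (fun x_1 => (j:ℝ) * Real.cos ((j:ℝ) * x_1) * Real.exp (x * Real.cos x_1))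
      = fun x_1 => (j:ℝ) * (Real.exp (x * Real.cos x_1) * Real.cos ((j:ℝ) * x_1)) from
      funext fun _ => by ring,
    intervalIntegral.integral_const_mul]
  ring

lemma besselI_zero_arg (j : ℤ) (hj : j ≠ 0) : besselI j 0 = 0 := by
  have hj' : (j:ℝ) ≠ 0 := Int.cast_ne_zero.mpr hj
  have hd : ∀ φ ∈ Set.uIcc (0:ℝ) Real.pi,
      HasDerivAt (fun φ => Real.sin ((j:ℝ)*φ) * (1/(j:ℝ))) (Real.cos ((j:ℝ)*φ)) φ := by
    intro φ _
    have h := (((hasDerivAt_id φ).const_mul (j:ℝ)).sin).mul_const (1/(j:ℝ))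
    exact h.congr_deriv (by simp [hj'])
  have := intervalIntegral.integral_eq_sub_of_hasDerivAt hd
    (Continuous.intervalIntegrable (by fun_prop) _ _)
  rw [besselI]
  simp only [zero_mul, Real.exp_zero, one_mul]
  rw [this]
  simp [Real.sin_int_mul_pi j]

lemma besselI_neg_one (x : ℝ) : besselI (-1) x = besselI 1 x := by
  rw [besselI, besselI]
  congr 1
  apply intervalIntegral.integral_congr
  intro φ _
  simp only
  push_cast
  rw [show (-1:ℝ) * φ = -(1 * φ) by ring, Real.cos_neg]

lemma besselI_zero_pos (x : ℝ) : 0 < besselI 0 x := by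
  rw [besselI]
  have hπ : (0:ℝ) < Real.pi := Real.pi_pos
  apply mul_pos (by positivity)
  apply intervalIntegral.intervalIntegral_pos_of_pos_on
    (Continuous.intervalIntegrable (by fun_prop) _ _) _ hπ
  intro φ _
  simp [Real.exp_pos]

lemma continuous_besselI (j : ℤ) : Continuous (besselI j) :=
  continuous_iff_continuousAt.mpr fun x => (hasDerivAt_besselI j x).continuousAt

lemma hasDerivAt_pow_mul_besselI (k : ℕ) (x : ℝ) :
    HasDerivAt (fun t => t^(k+1) * besselI (k+1) t) (x^(k+1) * besselI k x) x := by
  have h := (hasDerivAt_pow (k+1) x).mul (hasDerivAt_besselI (k+1) x)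
  refine h.congr_deriv (Eq.symm ?_)
  rcases eq_or_ne x 0 with rfl | hx
  · have h1 : besselI ((k:ℤ)+1) 0 = 0 := besselI_zero_arg _ (by omega)
    simp [h1]
  · have hrec := besselI_recurrence ((k:ℤ)+1) hx
    have hcast : ((k:ℤ)+1-1) = (k:ℤ) := by ring
    rw [hcast] at hrec ⊢
    push_cast at hrec ⊢
    have hrec' : x * (besselI (k:ℤ) x - besselI ((k:ℤ)+1+1) x)
        = 2*((k:ℝ)+1) * besselI ((k:ℤ)+1) x := by
      field_simp at hrec
      linarith
    field_simp
    linear_combination x^k * hrec'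

lemma besselI_ftc (n : ℕ) (x : ℝ) :
    ∫ t in (0:ℝ)..x, t^(n+1) * besselI n t = x^(n+1) * besselI (n+1) x := by
  have ftc := intervalIntegral.integral_eq_sub_of_hasDerivAt
    (f := fun t => t^(n+1) * besselI ((n:ℤ)+1) t)
    (f' := fun t => t^(n+1) * besselI n t) (a := 0) (b := x)
    (fun t _ => hasDerivAt_pow_mul_besselI n t)
    (Continuous.intervalIntegrable ((continuous_pow (n+1)).mul (continuous_besselI _)) _ _)
  rw [ftc]
  have h1 : besselI ((n:ℤ)+1) 0 = 0 := besselI_zero_arg _ (by omega)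
  simp [h1]

lemma besselI_pos (k : ℕ) {x : ℝ} (hx : 0 < x) : 0 < besselI k x := by
  induction k generalizing x with
  | zero => exact_mod_cast besselI_zero_pos x
  | succ n ih =>
    have hpos : 0 < ∫ t in (0:ℝ)..x, t^(n+1) * besselI (n:ℤ) t :=
      intervalIntegral.intervalIntegral_pos_of_pos_on
        (Continuous.intervalIntegrable ((continuous_pow (n+1)).mul (continuous_besselI _)) _ _)
        (fun t ht => mul_pos (pow_pos ht.1 _) (ih ht.1)) hx
    rw [besselI_ftc n x] at hpos
    have hxp : (0:ℝ) < x^(n+1) := pow_pos hx _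
    have : 0 < besselI ((n:ℤ)+1) x := by nlinarith
    exact_mod_cast this

lemma besselI_idx_nonneg (j : ℤ) (hj : 0 ≤ j) {x : ℝ} (hx : 0 ≤ x) : 0 ≤ besselI j x := by
  lift j to ℕ using hj
  rcases hx.eq_or_lt with rfl | hx
  · rcases Nat.eq_zero_or_pos j with rfl | hj0
    · exact_mod_cast (besselI_zero_pos 0).le
    · rw [besselI_zero_arg _ (by exact_mod_cast hj0.ne')]
  · exact (besselI_pos j hx).le

lemma besselI_pred_nonneg (k : ℕ) {x : ℝ} (hx : 0 ≤ x) : 0 ≤ besselI ((k:ℤ)-1) x := by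
  cases k with
  | zero =>
    rw [show ((0:ℕ):ℤ)-1 = -1 by ring, besselI_neg_one]
    exact besselI_idx_nonneg 1 (by omega) hx
  | succ n =>
    exact besselI_idx_nonneg _ (by omega) hx

lemma besselI_monotoneOn (k : ℕ) : MonotoneOn (besselI k) (Set.Ici (0:ℝ)) := by
  apply monotoneOn_of_deriv_nonneg (convex_Ici 0) (continuous_besselI k).continuousOn
  · intro x _
    exact (hasDerivAt_besselI k x).differentiableAt.differentiableWithinAt
  · intro x hx
    rw [interior_Ici] at hx
    rw [(hasDerivAt_besselI k x).deriv]
    have h1 : 0 ≤ besselI ((k:ℤ)-1) x := besselI_pred_nonneg k hx.le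
    have h2 : 0 ≤ besselI ((k:ℤ)+1) x := besselI_idx_nonneg _ (by omega) hx.le
    linarith

lemma besselI_div_pow_monotoneOn (k : ℕ) :
    MonotoneOn (fun t => besselI k t / t^k) (Set.Ioi (0:ℝ)) := by
  have hderiv : ∀ t : ℝ, 0 < t →
      HasDerivAt (fun t => besselI k t / t^k) (besselI ((k:ℤ)+1) t / t^k) t := by
    intro t ht
    have htk : (t:ℝ)^k ≠ 0 := pow_ne_zero _ ht.ne'
    have hd := (hasDerivAt_besselI k t).div (hasDerivAt_pow k t) htk
    refine hd.congr_deriv (Eq.symm ?_)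
    have ha := besselI_recurrence (k:ℤ) ht.ne'
    have hA : besselI ((k:ℤ)-1) t = besselI ((k:ℤ)+1) t + (2*((k:ℤ):ℝ)/t) * besselI k t := by
      linarith [ha]
    rw [hA]
    rcases Nat.eq_zero_or_pos k with rfl | hk0
    · push_cast
      field_simp
      ring
    · obtain ⟨m, rfl⟩ : ∃ m, k = m+1 := ⟨k-1, (Nat.succ_pred_eq_of_pos hk0).symm⟩
      simp only [Nat.add_sub_cancel]
      push_cast
      field_simp
      ring
  apply monotoneOn_of_deriv_nonneg (convex_Ioi 0)
  · intro t ht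
    exact ((hderiv t ht).continuousAt).continuousWithinAt
  · intro t ht
    rw [interior_Ioi] at ht
    exact ((hderiv t ht).differentiableAt).differentiableWithinAt
  · intro t ht
    rw [interior_Ioi] at ht
    rw [(hderiv t ht).deriv]
    exact div_nonneg (besselI_idx_nonneg _ (by omega) ht.le) (pow_nonneg ht.le _)

lemma besselI_ratio_bound (k : ℕ) {x : ℝ} (hx : 0 < x) :
    besselI ((k:ℤ)+1) x * (2*(k:ℝ)+2) ≤ x * besselI k x := by
  have hxk : (0:ℝ) < x^k := pow_pos hx _
  have hmono : ∀ t ∈ Set.Icc (0:ℝ) x,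
      t^(k+1) * besselI k t ≤ t^(2*k+1) * (besselI k x / x^k) := by
    intro t ht
    rcases ht.1.eq_or_lt with rfl | htpos
    · simp
    · have h := besselI_div_pow_monotoneOn k (Set.mem_Ioi.mpr htpos)
        (Set.mem_Ioi.mpr hx) ht.2
      have htk : (0:ℝ) < t^k := pow_pos htpos _
      rw [div_le_div_iff₀ htk hxk] at h
      have h2 : t^(k+1) * (besselI k t * x^k) ≤ t^(k+1) * (besselI k x * t^k) :=
        mul_le_mul_of_nonneg_left h (by positivity)
      rw [mul_div_assoc', le_div_iff₀ hxk]
      have e1 : t^(k+1) * (besselI k x * t^k) = t^(2*k+1) * besselI k x := by ring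
      have e2 : t^(k+1) * (besselI (k:ℤ) t * x^k) = t^(k+1) * besselI (k:ℤ) t * x^k := by ring
      linarith [h2]
  have hint := intervalIntegral.integral_mono_on (μ := MeasureTheory.volume) hx.le
    (Continuous.intervalIntegrable ((continuous_pow (k+1)).mul (continuous_besselI _)) _ _)
    (Continuous.intervalIntegrable ((continuous_pow (2*k+1)).mul continuous_const) _ _)
    hmono
  simp only [Pi.mul_apply] at hint
  rw [besselI_ftc k x] at hint
  have hrhs : ∫ t in (0:ℝ)..x, t^(2*k+1) * (besselI k x / x^k)
      = x^(2*k+2) / (2*(k:ℝ)+2) * (besselI k x / x^k) := by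
    simp only [intervalIntegral.integral_mul_const, integral_pow]
    push_cast
    ring_nf
  rw [hrhs] at hint
  have hxp : (0:ℝ) < x^(k+1) := pow_pos hx _
  have key : x^(k+1) * (besselI ((k:ℤ)+1) x * (2*(k:ℝ)+2)) ≤ x^(k+1) * (x * besselI k x) := by
    have h2 : (0:ℝ) < 2*(k:ℝ)+2 := by positivity
    have hx2k : x^(2*k+2) / (2*(k:ℝ)+2) * (besselI k x / x^k) * (2*(k:ℝ)+2)
        = x^(k+1) * (x * besselI k x) := by
      field_simp
      ring
    calc x^(k+1) * (besselI ((k:ℤ)+1) x * (2*(k:ℝ)+2))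
        = (x^(k+1) * besselI ((k:ℤ)+1) x) * (2*(k:ℝ)+2) := by ring
      _ ≤ (x^(2*k+2) / (2*(k:ℝ)+2) * (besselI k x / x^k)) * (2*(k:ℝ)+2) :=
          mul_le_mul_of_nonneg_right hint h2.le
      _ = x^(k+1) * (x * besselI k x) := hx2k
  exact le_of_mul_le_mul_left key hxp

noncomputable def besselRatio (k : ℕ) (x : ℝ) : ℝ := besselI ((k:ℤ)+1) x / besselI k x

lemma hasDerivAt_besselRatio (k : ℕ) {x : ℝ} (hx : 0 < x) :
    HasDerivAt (besselRatio k)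
      (1 - (besselRatio k x)^2 - ((2*(k:ℝ)+1)/x) * besselRatio k x) x := by
  have hk : besselI (k:ℤ) x ≠ 0 := (besselI_pos k hx).ne'
  have h1 := hasDerivAt_besselI k x
  have h2 := hasDerivAt_besselI ((k:ℤ)+1) x
  rw [show ((k:ℤ)+1-1) = (k:ℤ) by ring] at h2
  have hdiv := h2.div h1 hk
  have ha := besselI_recurrence (k:ℤ) hx.ne'
  have hb := besselI_recurrence ((k:ℤ)+1) hx.ne'
  rw [show ((k:ℤ)+1-1) = (k:ℤ) by ring] at hb
  have hA : besselI ((k:ℤ)-1) x = besselI ((k:ℤ)+1) x + (2*((k:ℤ):ℝ)/x) * besselI k x := by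
    linarith [ha]
  have hB : besselI ((k:ℤ)+1+1) x
      = besselI (k:ℤ) x - (2*(((k:ℤ):ℝ)+1)/x) * besselI ((k:ℤ)+1) x := by
    push_cast at hb ⊢
    linarith [hb]
  rw [hA, hB] at hdiv
  refine hdiv.congr_deriv (Eq.symm ?_)
  rw [besselRatio]
  push_cast
  field_simp
  ring

noncomputable def besselR (k : ℕ) (x : ℝ) : ℝ :=
  x / (((k:ℝ)+1/2) + Real.sqrt (((k:ℝ)+1/2)^2 + x^2))

lemma besselR_denom_pos (k : ℕ) (x : ℝ) :
    0 < ((k:ℝ)+1/2) + Real.sqrt (((k:ℝ)+1/2)^2 + x^2) := by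
  have h1 : (0:ℝ) < (k:ℝ)+1/2 := by positivity
  have h2 : (0:ℝ) ≤ Real.sqrt (((k:ℝ)+1/2)^2 + x^2) := Real.sqrt_nonneg _
  linarith

lemma besselR_pos (k : ℕ) {x : ℝ} (hx : 0 < x) : 0 < besselR k x :=
  div_pos hx (besselR_denom_pos k x)

lemma besselR_root (k : ℕ) {x : ℝ} (hx : x ≠ 0) :
    1 - (besselR k x)^2 - ((2*(k:ℝ)+1)/x) * besselR k x = 0 := by
  rw [besselR, show 2*(k:ℝ)+1 = 2*((k:ℝ)+1/2) by ring]
  generalize ha : (k:ℝ)+1/2 = a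
  have hapos : (0:ℝ) < a := by rw [← ha]; positivity
  have hs : Real.sqrt (a^2 + x^2) ^ 2 = a^2 + x^2 := Real.sq_sqrt (by positivity)
  set s : ℝ := Real.sqrt (a^2+x^2) with hsdef
  have hsnn : 0 ≤ s := Real.sqrt_nonneg _
  have hd : 0 < a + s := by linarith
  field_simp
  nlinarith [hs]

lemma hasDerivAt_besselR (k : ℕ) {x : ℝ} (hx : 0 < x) :
    ∃ D : ℝ, 0 < D ∧ HasDerivAt (besselR k) D x := by
  set a : ℝ := (k:ℝ)+1/2 with ha
  have hanz : a^2 + x^2 ≠ 0 := by positivity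
  have hspos : 0 < Real.sqrt (a^2+x^2) := Real.sqrt_pos.mpr (by positivity)
  have hinner : HasDerivAt (fun y : ℝ => a^2 + y^2) (2*x) x := by
    simpa using ((hasDerivAt_pow 2 x).const_add (a^2))
  have hsqrt : HasDerivAt (fun y : ℝ => Real.sqrt (a^2 + y^2)) (2*x / (2*Real.sqrt (a^2+x^2))) x :=
    hinner.sqrt hanz
  have hden : HasDerivAt (fun y : ℝ => a + Real.sqrt (a^2 + y^2))
      (2*x / (2*Real.sqrt (a^2+x^2))) x := hsqrt.const_add a
  have hdiv := (hasDerivAt_id x).div hden (besselR_denom_pos k x).ne'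
  simp only [id] at hdiv
  have hs : Real.sqrt (a^2 + x^2) ^ 2 = a^2 + x^2 := Real.sq_sqrt (by positivity)
  set s : ℝ := Real.sqrt (a^2+x^2) with hsdef
  refine ⟨_, ?_, hdiv⟩
  have hnum : 1 * (a + s) - x * (2*x/(2*s)) = a * (a + s) / s := by
    field_simp
    nlinarith [hs]
  rw [hnum]
  have hapos : (0:ℝ) < a := by positivity
  have : (0:ℝ) < a + s := by linarith
  positivity

lemma besselRatio_nonneg (k : ℕ) {x : ℝ} (hx : 0 < x) : 0 ≤ besselRatio k x :=
  div_nonneg (besselI_idx_nonneg _ (by omega) hx.le) (besselI_pos k hx).le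

lemma besselRatio_lt_besselR_small (k : ℕ) {x : ℝ} (hx : 0 < x) (hx2 : x^2 < 2*(k:ℝ)+2) :
    besselRatio k x < besselR k x := by
  have hIk : 0 < besselI (k:ℤ) x := besselI_pos k hx
  have h1 : besselRatio k x ≤ x / (2*(k:ℝ)+2) := by
    rw [besselRatio, div_le_div_iff₀ hIk (by positivity)]
    exact besselI_ratio_bound k hx
  have h2 : x / (2*(k:ℝ)+2) < besselR k x := by
    rw [besselR]
    apply div_lt_div_of_pos_left hx (besselR_denom_pos k x)
    have hsl : Real.sqrt (((k:ℝ)+1/2)^2 + x^2) < (k:ℝ)+3/2 := by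
      rw [show (k:ℝ)+3/2 = Real.sqrt (((k:ℝ)+3/2)^2) by rw [Real.sqrt_sq (by positivity)]]
      apply Real.sqrt_lt_sqrt (by positivity)
      nlinarith
    linarith
  linarith

lemma besselRatio_lt_besselR (k : ℕ) {x : ℝ} (hx : 0 < x) :
    besselRatio k x < besselR k x := by
  by_contra hcon
  push_neg at hcon
  set S : Set ℝ := {y : ℝ | 0 < y ∧ besselR k y ≤ besselRatio k y} with hS
  have hxS : x ∈ S := ⟨hx, hcon⟩
  have hSc : ∀ y ∈ S, Real.sqrt (2*(k:ℝ)+2) ≤ y := by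
    intro y hy
    by_contra hlt
    push_neg at hlt
    have hy2 : y^2 < 2*(k:ℝ)+2 := by
      have := Real.sq_sqrt (show (0:ℝ) ≤ 2*(k:ℝ)+2 by positivity)
      nlinarith [hy.1, Real.sqrt_nonneg (2*(k:ℝ)+2)]
    exact absurd (besselRatio_lt_besselR_small k hy.1 hy2) (not_lt.mpr hy.2)
  have hbdd : BddBelow S := ⟨Real.sqrt (2*(k:ℝ)+2), hSc⟩
  have hne : S.Nonempty := ⟨x, hxS⟩
  set x₀ : ℝ := sInf S with hx0def
  have hx0lb : Real.sqrt (2*(k:ℝ)+2) ≤ x₀ := le_csInf hne hSc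
  have hx0pos : 0 < x₀ :=
    lt_of_lt_of_le (Real.sqrt_pos.mpr (by positivity)) hx0lb
  -- continuity at x₀
  have hrat_deriv := hasDerivAt_besselRatio k hx0pos
  obtain ⟨D, hDpos, hRderiv⟩ := hasDerivAt_besselR k hx0pos
  have hrat_cont : ContinuousAt (besselRatio k) x₀ := hrat_deriv.continuousAt
  have hR_cont : ContinuousAt (besselR k) x₀ := hRderiv.continuousAt
  -- x₀ satisfies R ≤ ratio by approximation from within S
  have hx0S : besselR k x₀ ≤ besselRatio k x₀ := by
    have hcl : x₀ ∈ closure S := csInf_mem_closure hne hbdd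
    have hnb : (𝓝[S] x₀).NeBot := mem_closure_iff_nhdsWithin_neBot.mp hcl
    have htend : Filter.Tendsto (fun y => besselRatio k y - besselR k y) (𝓝[S] x₀)
        (𝓝 (besselRatio k x₀ - besselR k x₀)) :=
      (hrat_cont.sub hR_cont).continuousWithinAt
    have hev : ∀ᶠ y in 𝓝[S] x₀, 0 ≤ besselRatio k y - besselR k y := by
      filter_upwards [self_mem_nhdsWithin] with y hy
      exact sub_nonneg.mpr hy.2
    have := ge_of_tendsto htend hev
    linarith
  -- strictly below x₀ we have ratio < R
  have hbelow : ∀ y, 0 < y → y < x₀ → besselRatio k y < besselR k y := by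
    intro y hy hylt
    by_contra hcon2
    push_neg at hcon2
    exact absurd (csInf_le hbdd ⟨hy, hcon2⟩) (not_le.mpr hylt)
  -- slope argument: f = ratio - R has f' ≥ 0 at x₀
  have hf : HasDerivAt (fun y => besselRatio k y - besselR k y)
      ((1 - (besselRatio k x₀)^2 - ((2*(k:ℝ)+1)/x₀) * besselRatio k x₀) - D) x₀ :=
    hrat_deriv.sub hRderiv
  have hfnonneg : 0 ≤ (1 - (besselRatio k x₀)^2 - ((2*(k:ℝ)+1)/x₀) * besselRatio k x₀) - D := by
    have hslope := hasDerivAt_iff_tendsto_slope.mp hf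
    have hsub : Set.Iio x₀ ⊆ {x₀}ᶜ := fun y hy => ne_of_lt hy
    have hslope' := hslope.mono_left (nhdsWithin_mono x₀ hsub)
    apply ge_of_tendsto hslope'
    have hmem : x₀ ∈ Set.Ioc (x₀/2) x₀ := ⟨by linarith, le_refl x₀⟩
    filter_upwards [Ioo_mem_nhdsLT_of_mem hmem] with y hy
    have hy1 : 0 < y := lt_trans (by linarith) hy.1
    have hy2 : y < x₀ := hy.2
    have hnum : besselRatio k y - besselR k y < 0 := sub_neg.mpr (hbelow y hy1 hy2)
    have hnum0 : 0 ≤ besselRatio k x₀ - besselR k x₀ := sub_nonneg.mpr hx0S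
    rw [slope_def_field]
    apply div_nonneg_iff.mpr
    refine Or.inr ⟨?_, ?_⟩
    · linarith
    · linarith
  -- Riccati: derivative at x₀ is ≤ 0 since ratio x₀ ≥ R x₀ ≥ 0
  have hRpos : 0 < besselR k x₀ := besselR_pos k hx0pos
  have hroot := besselR_root k hx0pos.ne'
  have hge : besselR k x₀ ≤ besselRatio k x₀ := hx0S
  have hderiv_nonpos : (1 - (besselRatio k x₀)^2 - ((2*(k:ℝ)+1)/x₀) * besselRatio k x₀) ≤ 0 := by
    have h2a : 0 < (2*(k:ℝ)+1)/x₀ := by positivity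
    nlinarith [hge, hRpos]
  linarith [hfnonneg, hDpos, hderiv_nonpos]

lemma besselRatio_pos (k : ℕ) {x : ℝ} (hx : 0 < x) : 0 < besselRatio k x := by
  apply div_pos _ (besselI_pos k hx)
  have := besselI_pos (k+1) hx
  push_cast at this
  exact this

lemma besselRatio_strictMonoOn (k : ℕ) : StrictMonoOn (besselRatio k) (Set.Ioi (0:ℝ)) := by
  apply strictMonoOn_of_deriv_pos (convex_Ioi 0)
  · intro t ht
    exact ((hasDerivAt_besselRatio k ht).continuousAt).continuousWithinAt
  · intro t ht
    rw [interior_Ioi] at ht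
    rw [(hasDerivAt_besselRatio k ht).deriv]
    have hrR := besselRatio_lt_besselR k ht
    have hroot := besselR_root k (ne_of_gt ht)
    have hrnn := besselRatio_nonneg k ht
    have hRpos := besselR_pos k ht
    have ht' : (0:ℝ) < t := ht
    have hc : 0 < (2*(k:ℝ)+1)/t := by positivity
    nlinarith [mul_pos hc (sub_pos.mpr hrR)]

lemma besselI_succ_eq (k : ℕ) {y : ℝ} (hy : 0 < y) :
    besselI (↑(k+1)) y = besselRatio k y * besselI k y := by
  rw [besselRatio, div_mul_cancel₀ _ (besselI_pos k hy).ne']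
  norm_cast

theorem besselI_two_by_two_det_pos (k₁ k₂ : ℕ) (hk : k₁ < k₂)
    (x₁ x₂ : ℝ) (hx₁ : 0 < x₁) (hx : x₁ < x₂) :
    0 < besselI k₁ x₁ * besselI k₂ x₂ - besselI k₂ x₁ * besselI k₁ x₂ := by
  have hx₂ : 0 < x₂ := hx₁.trans hx
  obtain ⟨d, rfl⟩ : ∃ d, k₂ = k₁ + d + 1 := ⟨k₂ - k₁ - 1, by omega⟩
  clear hk
  induction d with
  | zero =>
    have hmono := besselRatio_strictMonoOn k₁ (Set.mem_Ioi.mpr hx₁) (Set.mem_Ioi.mpr hx₂) hx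
    have h1 := besselI_pos k₁ hx₁
    have h2 := besselI_pos k₁ hx₂
    have hr1 := besselRatio_pos k₁ hx₁
    rw [show k₁ + 0 + 1 = k₁ + 1 by ring, besselI_succ_eq k₁ hx₁, besselI_succ_eq k₁ hx₂]
    nlinarith [mul_pos (mul_pos h1 h2) (sub_pos.mpr hmono)]
  | succ n ih =>
    have hmono := besselRatio_strictMonoOn (k₁+n+1)
      (Set.mem_Ioi.mpr hx₁) (Set.mem_Ioi.mpr hx₂) hx
    have hr1 := besselRatio_pos (k₁+n+1) hx₁
    have hA := mul_pos (besselI_pos k₁ hx₁) (besselI_pos (k₁+n+1) hx₂)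
    rw [show k₁ + (n+1) + 1 = (k₁+n+1) + 1 by ring,
      besselI_succ_eq (k₁+n+1) hx₁, besselI_succ_eq (k₁+n+1) hx₂]
    nlinarith [mul_pos hr1 ih, mul_pos (sub_pos.mpr hmono) hA]
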